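/- Let n ≥ 2 be an integer and let A be a finite-valued Young function with A(t) > 0 for t > 0, satisfying the ∇₂-condition globally and the conditions ∫₀ (τ/A(τ))^{1/(n−1)} dτ < ∞ near zero and ∫^∞ (τ/A(τ))^{1/(n−1)} dτ = ∞. Then lim_{τ→0⁺} ( sup_{t>0} A_T(τ t)/(τ A_T(t)) ) = 0. -/

import Mathlib

open MeasureTheory Set Filter
open scoped ENNReal Topology

/-- A finite-valued Young function: convex, vanishing at `0`, nonnegative on `[0,∞)`,
and not identically zero there. -/
structure IsYoung (A : ℝ → ℝ) : Prop where
  zero : A 0 = 0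
  nonneg : ∀ t, 0 ≤ t → 0 ≤ A t
  convex : ConvexOn ℝ (Set.Ici 0) A
  nontrivial : ∃ t, 0 < t ∧ 0 < A t

/-- `H_n(t) = ( ∫₀^t (τ/A(τ))^{1/(n−1)} dτ )^{1/n′}`, where `n′ = n/(n−1)`. -/
noncomputable def Hn (A : ℝ → ℝ) (n : ℕ) (t : ℝ) : ℝ :=
  ((∫⁻ τ in Set.Ioc (0:ℝ) t,
      ENNReal.ofReal ((τ / A τ) ^ (1/((n:ℝ)-1)))).toReal) ^ (((n:ℝ)-1)/n)

/-- The inverse of `H_n` (as a generalized inverse). -/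
noncomputable def HnInv (A : ℝ → ℝ) (n : ℕ) (t : ℝ) : ℝ :=
  sInf {s : ℝ | 0 ≤ s ∧ t ≤ Hn A n s}

/-- The Sobolev trace conjugate `A_T(t) = ∫₀^t A(H_n⁻¹(τ))/H_n⁻¹(τ) dτ`. -/
noncomputable def AT (A : ℝ → ℝ) (n : ℕ) (t : ℝ) : ℝ :=
  ∫ τ in Set.Ioc (0:ℝ) t, A (HnInv A n τ) / HnInv A n τ

/-- `∫₀ (τ/A(τ))^{1/(n−1)} dτ < ∞` near zero. -/
def ConvNearZero (A : ℝ → ℝ) (n : ℕ) : Prop :=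
  ∃ δ > (0:ℝ), (∫⁻ τ in Set.Ioc (0:ℝ) δ,
    ENNReal.ofReal ((τ / A τ) ^ (1/((n:ℝ)-1)))) < ⊤

/-- `∫^∞ (τ/A(τ))^{1/(n−1)} dτ = ∞`. -/
def DivNearInfty (A : ℝ → ℝ) (n : ℕ) : Prop :=
  (∫⁻ τ in Set.Ioi (1:ℝ), ENNReal.ofReal ((τ / A τ) ^ (1/((n:ℝ)-1)))) = ⊤

/-- `A` satisfies the `∇₂`-condition globally. -/
def Nabla2Global (A : ℝ → ℝ) : Prop :=
  ∃ c > (2:ℝ), ∀ t ≥ (0:ℝ), c * A t ≤ A (2 * t)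

section Aux
variable {A : ℝ → ℝ}

lemma young_key (hA : IsYoung A) {x y : ℝ} (hx : 0 ≤ x) (hxy : x ≤ y) (hy : 0 < y) :
    A x ≤ x / y * A y := by
  have ha : (0:ℝ) ≤ x / y := div_nonneg hx hy.le
  have hb : (0:ℝ) ≤ 1 - x / y := by
    have : x / y ≤ 1 := (div_le_one hy).2 hxy
    linarith
  have hab : x / y + (1 - x / y) = 1 := by ring
  have h2 := hA.convex.2 (mem_Ici.2 hy.le) (mem_Ici.2 (le_refl (0:ℝ))) ha hb hab
  have h1 : (x/y) • y + (1 - x/y) • (0:ℝ) = x := by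
    rw [smul_eq_mul, smul_eq_mul, mul_zero, add_zero, div_mul_cancel₀ x hy.ne']
  rw [h1] at h2
  simpa [hA.zero, smul_eq_mul] using h2

lemma young_mono (hA : IsYoung A) : MonotoneOn A (Ici 0) := by
  intro x hx y hy hxy
  rcases eq_or_lt_of_le hxy with rfl | hlt
  · exact le_rfl
  have hy0 : 0 < y := lt_of_le_of_lt hx hlt
  calc A x ≤ x / y * A y := young_key hA hx hxy hy0
    _ ≤ 1 * A y := by
        apply mul_le_mul_of_nonneg_right _ (hA.nonneg y hy0.le)
        exact (div_le_one hy0).2 hxy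
    _ = A y := one_mul _

lemma young_slope_mono (hA : IsYoung A) {x y : ℝ} (hx : 0 ≤ x) (hxy : x ≤ y) :
    A x / x ≤ A y / y := by
  rcases eq_or_lt_of_le hx with rfl | hx0
  · simpa [hA.zero] using div_nonneg (hA.nonneg y hxy) (le_trans hx hxy)
  have hy0 : 0 < y := lt_of_lt_of_le hx0 hxy
  have h := young_key hA hx0.le hxy hy0
  rw [div_le_div_iff₀ hx0 hy0]
  calc A x * y ≤ (x / y * A y) * y := by nlinarith
    _ = A y * x := by field_simp

end Aux


noncomputable def gE (A : ℝ → ℝ) (n : ℕ) : ℝ → ℝ≥0∞ :=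
  fun τ => ENNReal.ofReal ((τ / A τ) ^ (1/((n:ℝ)-1)))
noncomputable def In (A : ℝ → ℝ) (n : ℕ) (t : ℝ) : ℝ≥0∞ :=
  ∫⁻ τ in Set.Ioc (0:ℝ) t, gE A n τ

section M
variable {A : ℝ → ℝ} {n : ℕ}

-- assume given:
variable (hn : 2 ≤ n) (hAmono : MonotoneOn A (Ici 0)) (hApos : ∀ t > (0:ℝ), 0 < A t)
  (hgE : AEMeasurable (gE A n) (volume.restrict (Ioi 0)))
  (hconv : ∃ δ > (0:ℝ), In A n δ < ⊤)
  (hdiv : (∫⁻ τ in Set.Ioi (1:ℝ), gE A n τ) = ⊤)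

include hn hAmono hApos hconv in
lemma In_lt_top (t : ℝ) : In A n t < ⊤ := by
  obtain ⟨δ, hδ, hIδ⟩ := hconv
  rcases le_or_gt t δ with h | h
  · exact lt_of_le_of_lt (lintegral_mono_set (Ioc_subset_Ioc_right h)) hIδ
  · have hsplit : Ioc (0:ℝ) t = Ioc 0 δ ∪ Ioc δ t := (Ioc_union_Ioc_eq_Ioc hδ.le h.le).symm
    have hAδ : 0 < A δ := hApos δ hδ
    set C : ℝ≥0∞ := ENNReal.ofReal ((t / A δ) ^ (1/((n:ℝ)-1))) with hC
    have hbound : ∫⁻ τ in Ioc δ t, gE A n τ ≤ ∫⁻ _ in Ioc δ t, C := by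
      apply setLIntegral_mono' measurableSet_Ioc
      intro x hx
      apply ENNReal.ofReal_le_ofReal
      apply Real.rpow_le_rpow (div_nonneg (le_of_lt (lt_trans hδ hx.1)) (hApos x (lt_trans hδ hx.1)).le)
      · exact div_le_div₀ (le_trans (lt_trans hδ hx.1).le hx.2) hx.2 hAδ
          (hAmono (mem_Ici.2 hδ.le) (mem_Ici.2 (lt_trans hδ hx.1).le) hx.1.le)
      · have h2n : (2:ℝ) ≤ (n:ℝ) := by exact_mod_cast hn
        have h1 : (0:ℝ) < (n:ℝ) - 1 := by linarith
        positivity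
    have : In A n t ≤ In A n δ + ∫⁻ τ in Ioc δ t, gE A n τ := by
      rw [In, hsplit]
      exact lintegral_union_le _ _ _
    refine lt_of_le_of_lt this (ENNReal.add_lt_top.2 ⟨hIδ, lt_of_le_of_lt hbound ?_⟩)
    rw [setLIntegral_const]
    exact ENNReal.mul_lt_top ENNReal.ofReal_lt_top measure_Ioc_lt_top

include hgE hdiv in
lemma In_iSup_top : ⨆ k : ℕ, In A n (k : ℝ) = ⊤ := by
  set μ := volume.restrict (Ioi (0:ℝ)) with hμ
  set f : ℕ → ℝ → ℝ≥0∞ := fun k => (Ioc (1:ℝ) (k:ℝ)).indicator (gE A n) with hf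
  have hfm : ∀ k, AEMeasurable (f k) μ := fun k => hgE.indicator measurableSet_Ioc
  have hmono : ∀ᵐ x ∂μ, Monotone fun k => f k x := by
    apply ae_of_all
    intro x k k' hkk'
    exact Set.indicator_le_indicator_of_subset
      (Ioc_subset_Ioc_right (by exact_mod_cast hkk')) (fun _ => zero_le) x
  have hsup : (fun x => ⨆ k, f k x) = (Ioi (1:ℝ)).indicator (gE A n) := by
    funext x
    by_cases hx : 1 < x
    · rw [Set.indicator_of_mem (mem_Ioi.mpr hx) (gE A n)]
      apply le_antisymm
      · exact iSup_le fun k => Set.indicator_le_self _ _ x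
      · obtain ⟨k, hk⟩ := exists_nat_ge x
        refine le_iSup_of_le k ?_
        have hmem : x ∈ Ioc (1:ℝ) (k:ℝ) := ⟨hx, hk⟩
        simp only [hf, Set.indicator_of_mem hmem]
        exact le_rfl
    · rw [Set.indicator_of_notMem (fun h => hx (mem_Ioi.mp h)) (gE A n)]
      simp only [ENNReal.iSup_eq_zero]
      intro k
      exact Set.indicator_of_notMem (fun h => hx h.1) _
  have key := lintegral_iSup' hfm hmono
  rw [hsup] at key
  have h1 : ∫⁻ x, (Ioi (1:ℝ)).indicator (gE A n) x ∂μ = ⊤ := by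
    rw [lintegral_indicator measurableSet_Ioi, hμ, Measure.restrict_restrict measurableSet_Ioi]
    rw [Set.inter_eq_self_of_subset_left (Ioi_subset_Ioi zero_le_one)]
    exact hdiv
  rw [h1] at key
  have h2 : ∀ k : ℕ, ∫⁻ x, f k x ∂μ ≤ In A n (k : ℝ) := by
    intro k
    rw [hf, lintegral_indicator measurableSet_Ioc, hμ,
      Measure.restrict_restrict measurableSet_Ioc]
    rw [Set.inter_eq_self_of_subset_left (show Ioc (1:ℝ) ((k:ℕ):ℝ) ⊆ Ioi 0 from fun x hx => lt_trans zero_lt_one hx.1)]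
    exact lintegral_mono_set (Ioc_subset_Ioc_left zero_le_one)
  exact top_le_iff.1 (key.le.trans (iSup_mono h2))

end M

noncomputable def Hn' (A : ℝ → ℝ) (n : ℕ) (t : ℝ) : ℝ :=
  (In A n t).toReal ^ (((n:ℝ)-1)/n)

lemma Hn_eq_Hn' (A : ℝ → ℝ) (n : ℕ) : Hn A n = Hn' A n := rfl

section H
variable {A : ℝ → ℝ} {n : ℕ}
variable (hn : 2 ≤ n) (hAmono : MonotoneOn A (Ici 0)) (hApos : ∀ t > (0:ℝ), 0 < A t)
  (hgE : AEMeasurable (gE A n) (volume.restrict (Ioi 0)))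
  (hconv : ∃ δ > (0:ℝ), In A n δ < ⊤)
  (hdiv : (∫⁻ τ in Set.Ioi (1:ℝ), gE A n τ) = ⊤)

include hn

lemma casts : (2:ℝ) ≤ (n:ℝ) ∧ (0:ℝ) < (n:ℝ) - 1 ∧ 0 < ((n:ℝ)-1)/n ∧ 0 < 1/((n:ℝ)-1) := by
  have h2n : (2:ℝ) ≤ (n:ℝ) := by exact_mod_cast hn
  have h1 : (0:ℝ) < (n:ℝ) - 1 := by linarith
  have h0 : (0:ℝ) < (n:ℝ) := by linarith
  exact ⟨h2n, h1, div_pos h1 h0, by positivity⟩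

omit hn in
lemma Hn'_nonneg (t : ℝ) : 0 ≤ Hn' A n t := Real.rpow_nonneg ENNReal.toReal_nonneg _

include hAmono hApos hconv in
lemma Hn'_mono : Monotone (Hn' A n) := by
  intro a b hab
  apply Real.rpow_le_rpow ENNReal.toReal_nonneg _ (casts hn).2.2.1.le
  exact ENNReal.toReal_mono (In_lt_top hn hAmono hApos hconv b).ne
    (lintegral_mono_set (Ioc_subset_Ioc_right hab))

include hAmono hApos hgE hconv hdiv in
lemma Hn'_unbounded : ∀ M : ℝ, ∃ s : ℝ, 0 ≤ s ∧ M ≤ Hn' A n s := by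
  intro M
  obtain ⟨-, -, he, -⟩ := casts hn
  set e := ((n:ℝ)-1)/n
  set M' := max M 1 with hM'
  have hM'pos : 0 < M' := lt_of_lt_of_le zero_lt_one (le_max_right _ _)
  have htop := In_iSup_top hgE hdiv
  have : ENNReal.ofReal (M' ^ (1/e)) < ⨆ k : ℕ, In A n (k:ℝ) := htop ▸ ENNReal.ofReal_lt_top
  obtain ⟨k, hk⟩ := lt_iSup_iff.1 this
  refine ⟨(k:ℝ), Nat.cast_nonneg k, ?_⟩
  have h1 : M' ^ (1/e) ≤ (In A n (k:ℝ)).toReal := by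
    have := ENNReal.toReal_mono (In_lt_top hn hAmono hApos hconv (k:ℝ)).ne hk.le
    rwa [ENNReal.toReal_ofReal (Real.rpow_nonneg hM'pos.le _)] at this
  have h2 : (M' ^ (1/e)) ^ e ≤ Hn' A n (k:ℝ) :=
    Real.rpow_le_rpow (Real.rpow_nonneg hM'pos.le _) h1 he.le
  rw [← Real.rpow_mul hM'pos.le, one_div, inv_mul_cancel₀ he.ne', Real.rpow_one] at h2
  exact le_trans (le_max_left _ _) h2

variable {c₀ : ℝ} (hc₀ : 2 < c₀) (hnab : ∀ t ≥ (0:ℝ), c₀ * A t ≤ A (2*t))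

include hn hApos hgE hc₀ hnab in
lemma In_scale (u : ℝ) :
    In A n (2*u) ≤ ENNReal.ofReal (2 * (2/c₀) ^ (1/((n:ℝ)-1))) * In A n u := by
  obtain ⟨h2n, hn1, he, hp⟩ := casts hn
  rcases le_or_gt u 0 with hu | hu
  · have : Ioc (0:ℝ) (2*u) = ∅ := Ioc_eq_empty (by linarith)
    simp [In, this]
  · have hc₀pos : (0:ℝ) < c₀ := by linarith
    have hindm : AEMeasurable ((Ioc (0:ℝ) (2*u)).indicator (gE A n)) volume := by
      rw [aemeasurable_indicator_iff measurableSet_Ioc]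
      exact hgE.mono_measure (Measure.restrict_mono Ioc_subset_Ioi_self le_rfl)
    have step1 : In A n (2*u) = ∫⁻ x, (Ioc (0:ℝ) (2*u)).indicator (gE A n) x ∂volume := by
      rw [lintegral_indicator measurableSet_Ioc]; rfl
    have step2 : (volume : Measure ℝ) = ENNReal.ofReal |2| • Measure.map (fun x => 2*x) volume :=
      (Real.smul_map_volume_mul_left two_ne_zero).symm
    have hmapmeas : AEMeasurable ((Ioc (0:ℝ) (2*u)).indicator (gE A n))
        (Measure.map (fun x : ℝ => 2*x) volume) := by
      rw [Real.map_volume_mul_left two_ne_zero]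
      exact hindm.smul_measure _
    have step3 : ∫⁻ x, (Ioc (0:ℝ) (2*u)).indicator (gE A n) x ∂volume
        = ENNReal.ofReal 2 * ∫⁻ x, (Ioc (0:ℝ) (2*u)).indicator (gE A n) (2*x) ∂volume := by
      conv_lhs => rw [step2]
      rw [lintegral_smul_measure]
      rw [lintegral_map' hmapmeas (measurable_const_mul 2).aemeasurable]
      norm_num
    have step4 : (fun x => (Ioc (0:ℝ) (2*u)).indicator (gE A n) (2*x))
        = (Ioc (0:ℝ) u).indicator (fun x => gE A n (2*x)) := by
      funext x
      by_cases hx : x ∈ Ioc (0:ℝ) u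
      · rw [Set.indicator_of_mem hx]
        have hmem : 2*x ∈ Ioc (0:ℝ) (2*u) := ⟨by linarith [hx.1], by linarith [hx.2]⟩
        exact Set.indicator_of_mem hmem _
      · rw [Set.indicator_of_notMem hx]
        refine Set.indicator_of_notMem (fun h : 2*x ∈ Ioc (0:ℝ) (2*u) => hx ⟨by linarith [h.1], by linarith [h.2]⟩) _
    have step5 : ∫⁻ x, (Ioc (0:ℝ) u).indicator (fun x => gE A n (2*x)) x ∂volume
        = ∫⁻ x in Ioc (0:ℝ) u, gE A n (2*x) ∂volume := lintegral_indicator measurableSet_Ioc _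
    have step6 : ∫⁻ x in Ioc (0:ℝ) u, gE A n (2*x) ∂volume
        ≤ ∫⁻ x in Ioc (0:ℝ) u, ENNReal.ofReal ((2/c₀) ^ (1/((n:ℝ)-1))) * gE A n x ∂volume := by
      apply setLIntegral_mono' measurableSet_Ioc
      intro x hx
      have hx0 : 0 < x := hx.1
      have hAx : 0 < A x := hApos x hx0
      have hA2x : 0 < A (2*x) := hApos _ (by linarith)
      have hbase : 2*x / A (2*x) ≤ 2/c₀ * (x / A x) := by
        have h1 : c₀ * A x ≤ A (2*x) := hnab x hx0.le
        rw [div_le_iff₀ hA2x]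
        have h2 : 2/c₀ * (x / A x) * (c₀ * A x) ≤ 2/c₀ * (x / A x) * A (2*x) := by
          apply mul_le_mul_of_nonneg_left h1
          positivity
        refine le_trans (le_of_eq ?_) h2
        field_simp
      have := Real.rpow_le_rpow (by positivity) hbase hp.le
      rw [Real.mul_rpow (by positivity) (by positivity)] at this
      calc gE A n (2*x) ≤ ENNReal.ofReal ((2/c₀) ^ (1/((n:ℝ)-1)) * (x / A x) ^ (1/((n:ℝ)-1))) :=
            ENNReal.ofReal_le_ofReal this
        _ = _ := by
            rw [ENNReal.ofReal_mul (by positivity)]; rfl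
    have step7 : ∫⁻ x in Ioc (0:ℝ) u, ENNReal.ofReal ((2/c₀) ^ (1/((n:ℝ)-1))) * gE A n x ∂volume
        = ENNReal.ofReal ((2/c₀) ^ (1/((n:ℝ)-1))) * In A n u :=
      lintegral_const_mul' _ _ ENNReal.ofReal_ne_top
    calc In A n (2*u) = ENNReal.ofReal 2 * ∫⁻ x, (Ioc (0:ℝ) (2*u)).indicator (gE A n) (2*x) ∂volume := by
          rw [step1, step3]
      _ ≤ ENNReal.ofReal 2 * (ENNReal.ofReal ((2/c₀) ^ (1/((n:ℝ)-1))) * In A n u) := by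
          rw [step4, step5]
          exact mul_le_mul_right (le_trans step6 step7.le) _
      _ = _ := by
          rw [← mul_assoc, ← ENNReal.ofReal_mul (by norm_num)]


omit hc₀ hnab in
include hn hApos hgE hc₀ hnab hAmono hconv in
lemma Hn'_scale (u : ℝ) :
    Hn' A n (2*u) ≤ (2 * (2/c₀) ^ (1/((n:ℝ)-1))) ^ (((n:ℝ)-1)/n) * Hn' A n u := by
  obtain ⟨h2n, hn1, he, hp⟩ := casts hn
  set K := 2 * (2/c₀) ^ (1/((n:ℝ)-1)) with hK
  have hKpos : 0 < K := by
    have : (0:ℝ) < (2/c₀) ^ (1/((n:ℝ)-1)) := Real.rpow_pos_of_pos (by positivity) _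
    positivity
  have h1 : (In A n (2*u)).toReal ≤ K * (In A n u).toReal := by
    have h2 := In_scale hn hApos hgE hc₀ hnab u
    have hfin : ENNReal.ofReal K * In A n u ≠ ⊤ :=
      ENNReal.mul_ne_top ENNReal.ofReal_ne_top (In_lt_top hn hAmono hApos hconv u).ne
    have := ENNReal.toReal_mono hfin h2
    rwa [ENNReal.toReal_mul, ENNReal.toReal_ofReal hKpos.le] at this
  calc Hn' A n (2*u) ≤ (K * (In A n u).toReal) ^ (((n:ℝ)-1)/n) :=
        Real.rpow_le_rpow ENNReal.toReal_nonneg h1 he.le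
    _ = _ := Real.mul_rpow hKpos.le ENNReal.toReal_nonneg

section HnInvSec

omit hc₀ hnab in
include hn hAmono hApos hgE hconv hdiv in
lemma S_nonempty (τ : ℝ) : {s : ℝ | 0 ≤ s ∧ τ ≤ Hn A n s}.Nonempty := by
  obtain ⟨s, hs0, hs⟩ := Hn'_unbounded hn hAmono hApos hgE hconv hdiv τ
  exact ⟨s, hs0, by rw [Hn_eq_Hn']; exact hs⟩

omit hn hAmono hApos hgE hconv hdiv hc₀ hnab in
lemma S_bddBelow (τ : ℝ) : BddBelow {s : ℝ | 0 ≤ s ∧ τ ≤ Hn A n s} :=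
  ⟨0, fun _ hx => hx.1⟩

omit hc₀ hnab in
include hn hAmono hApos hgE hconv hdiv in
lemma HnInv_nonneg (τ : ℝ) : 0 ≤ HnInv A n τ :=
  le_csInf (S_nonempty hn hAmono hApos hgE hconv hdiv τ) (fun _ hb => hb.1)

omit hc₀ hnab in
include hn hAmono hApos hgE hconv hdiv in
lemma HnInv_mono : Monotone (HnInv A n) := by
  intro τ₁ τ₂ h
  exact csInf_le_csInf (S_bddBelow τ₁) (S_nonempty hn hAmono hApos hgE hconv hdiv τ₂)
    (fun s hs => ⟨hs.1, le_trans h hs.2⟩)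

include hn hAmono hApos hgE hconv hdiv hc₀ hnab in
lemma HnInv_scale (σ : ℝ) :
    2 * HnInv A n σ ≤ HnInv A n ((2 * (2/c₀) ^ (1/((n:ℝ)-1))) ^ (((n:ℝ)-1)/n) * σ) := by
  obtain ⟨h2n, hn1, he, hp⟩ := casts hn
  set κ := (2 * (2/c₀) ^ (1/((n:ℝ)-1))) ^ (((n:ℝ)-1)/n) with hκ
  have hκpos : 0 < κ := by
    apply Real.rpow_pos_of_pos
    have : (0:ℝ) < (2/c₀) ^ (1/((n:ℝ)-1)) := Real.rpow_pos_of_pos (by positivity) _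
    positivity
  apply le_csInf (S_nonempty hn hAmono hApos hgE hconv hdiv _)
  rintro s'' ⟨hs''0, hs''⟩
  have h1 : Hn A n s'' ≤ κ * Hn A n (s''/2) := by
    have := Hn'_scale hn hAmono hApos hgE hconv hc₀ hnab (s''/2)
    rw [Hn_eq_Hn']
    convert this using 3 <;> ring
  have h2 : σ ≤ Hn A n (s''/2) := by
    have : κ * σ ≤ κ * Hn A n (s''/2) := le_trans hs'' h1
    exact le_of_mul_le_mul_left this hκpos
  have h3 : HnInv A n σ ≤ s''/2 := csInf_le (S_bddBelow σ) ⟨by linarith, h2⟩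
  linarith

end HnInvSec

variable (hA : IsYoung A)

omit hc₀ hnab in
include hn hA hAmono hApos hgE hconv hdiv in
lemma phi_mono : Monotone (fun τ => A (HnInv A n τ) / HnInv A n τ) := by
  intro τ₁ τ₂ h
  exact young_slope_mono hA (HnInv_nonneg hn hAmono hApos hgE hconv hdiv τ₁)
    (HnInv_mono hn hAmono hApos hgE hconv hdiv h)

omit hc₀ hnab in
include hn hA hAmono hApos hgE hconv hdiv in
lemma phi_nonneg (τ : ℝ) : 0 ≤ A (HnInv A n τ) / HnInv A n τ :=
  div_nonneg (hA.nonneg _ (HnInv_nonneg hn hAmono hApos hgE hconv hdiv τ))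
    (HnInv_nonneg hn hAmono hApos hgE hconv hdiv τ)

include hn hA hAmono hApos hgE hconv hdiv hc₀ hnab in
lemma phi_scale (σ : ℝ) :
    c₀/2 * (A (HnInv A n σ) / HnInv A n σ)
      ≤ A (HnInv A n ((2 * (2/c₀) ^ (1/((n:ℝ)-1))) ^ (((n:ℝ)-1)/n) * σ))
        / HnInv A n ((2 * (2/c₀) ^ (1/((n:ℝ)-1))) ^ (((n:ℝ)-1)/n) * σ) := by
  set s := HnInv A n σ with hs
  set σ' := (2 * (2/c₀) ^ (1/((n:ℝ)-1))) ^ (((n:ℝ)-1)/n) * σ with hσ'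
  set s' := HnInv A n σ' with hs'
  have hs0 : 0 ≤ s := HnInv_nonneg hn hAmono hApos hgE hconv hdiv σ
  have hphi' : 0 ≤ A s' / s' := phi_nonneg hn hAmono hApos hgE hconv hdiv hA σ'
  rcases eq_or_lt_of_le hs0 with hz | hpos
  · rw [← hz, hA.zero]
    simpa using hphi'
  have hdbl : 2 * s ≤ s' := HnInv_scale hn hAmono hApos hgE hconv hdiv hc₀ hnab σ
  have h1 : A (2*s) / (2*s) ≤ A s' / s' := young_slope_mono hA (by linarith) hdbl
  have h2 : c₀ * A s / (2*s) ≤ A (2*s) / (2*s) :=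
    div_le_div_of_nonneg_right (hnab s hs0) (by linarith)
  calc c₀/2 * (A s / s) = c₀ * A s / (2*s) := by
        rw [div_mul_div_comm, mul_comm 2 s, mul_comm c₀ (A s), mul_comm (A s) c₀]
    _ ≤ A s' / s' := le_trans h2 h1

omit hc₀ hnab in
include hn hA hAmono hApos hgE hconv hdiv in
lemma phi_integrableOn (a b : ℝ) :
    IntervalIntegrable (fun τ => A (HnInv A n τ) / HnInv A n τ) volume a b :=
  ((phi_mono hn hAmono hApos hgE hconv hdiv hA).monotoneOn _).intervalIntegrable

omit hc₀ hnab in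
include hn hA hAmono hApos hgE hconv hdiv in
lemma AT_nonneg (t : ℝ) : 0 ≤ AT A n t :=
  setIntegral_nonneg measurableSet_Ioc
    (fun x _ => phi_nonneg hn hAmono hApos hgE hconv hdiv hA x)

omit hc₀ hnab in
include hn hA hAmono hApos hgE hconv hdiv in
lemma AT_intervalEq {t : ℝ} (ht : 0 ≤ t) :
    AT A n t = ∫ x in (0:ℝ)..t, A (HnInv A n x) / HnInv A n x :=
  (intervalIntegral.integral_of_le ht).symm

omit hc₀ hnab in
include hn hA hAmono hApos hgE hconv hdiv in
lemma AT_mono {a b : ℝ} (ha : 0 ≤ a) (hab : a ≤ b) : AT A n a ≤ AT A n b := by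
  rw [AT_intervalEq hn hAmono hApos hgE hconv hdiv hA ha,
    AT_intervalEq hn hAmono hApos hgE hconv hdiv hA (le_trans ha hab)]
  apply intervalIntegral.integral_mono_interval (le_refl (0:ℝ)) ha hab
  · exact ae_of_all _ (fun x => phi_nonneg hn hAmono hApos hgE hconv hdiv hA x)
  · exact phi_integrableOn hn hAmono hApos hgE hconv hdiv hA 0 b

include hn hA hAmono hApos hgE hconv hdiv hc₀ hnab in
lemma AT_scale {t : ℝ} (ht : 0 ≤ t) :
    c₀/2 * (2 * (2/c₀) ^ (1/((n:ℝ)-1))) ^ (((n:ℝ)-1)/n) * AT A n t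
      ≤ AT A n ((2 * (2/c₀) ^ (1/((n:ℝ)-1))) ^ (((n:ℝ)-1)/n) * t) := by
  obtain ⟨h2n, hn1, he, hp⟩ := casts hn
  set φ : ℝ → ℝ := fun τ => A (HnInv A n τ) / HnInv A n τ with hφ
  set κ := (2 * (2/c₀) ^ (1/((n:ℝ)-1))) ^ (((n:ℝ)-1)/n) with hκ
  have hκpos : 0 < κ := by
    apply Real.rpow_pos_of_pos
    have : (0:ℝ) < (2/c₀) ^ (1/((n:ℝ)-1)) := Real.rpow_pos_of_pos (by positivity) _
    positivity
  have h0 : AT A n (κ*t) = ∫ x in (0:ℝ)..(κ*t), φ x :=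
    AT_intervalEq hn hAmono hApos hgE hconv hdiv hA (by positivity)
  have h1 : κ • ∫ x in (0:ℝ)..t, φ (κ*x) = ∫ x in (0:ℝ)..(κ*t), φ x := by
    have := intervalIntegral.smul_integral_comp_mul_left φ (a := (0:ℝ)) (b := t) κ
    simpa using this
  have hmono2 : Monotone (fun x => φ (κ*x)) := by
    intro x y hxy
    exact phi_mono hn hAmono hApos hgE hconv hdiv hA
      (mul_le_mul_of_nonneg_left hxy hκpos.le)
  have h2 : ∫ x in (0:ℝ)..t, c₀/2 * φ x ≤ ∫ x in (0:ℝ)..t, φ (κ*x) := by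
    apply intervalIntegral.integral_mono_on ht
    · exact (phi_integrableOn hn hAmono hApos hgE hconv hdiv hA 0 t).const_mul _
    · exact (hmono2.monotoneOn _).intervalIntegrable
    · intro x hx
      exact phi_scale hn hAmono hApos hgE hconv hdiv hc₀ hnab hA x
  have h3 : ∫ x in (0:ℝ)..t, c₀/2 * φ x = c₀/2 * ∫ x in (0:ℝ)..t, φ x :=
    intervalIntegral.integral_const_mul _ _
  have h4 : AT A n t = ∫ x in (0:ℝ)..t, φ x :=
    AT_intervalEq hn hAmono hApos hgE hconv hdiv hA ht
  rw [h0, ← h1, h4]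
  rw [h3] at h2
  calc c₀/2 * κ * ∫ x in (0:ℝ)..t, φ x = κ * (c₀/2 * ∫ x in (0:ℝ)..t, φ x) := by ring
    _ ≤ κ * ∫ x in (0:ℝ)..t, φ (κ*x) := by
        exact mul_le_mul_of_nonneg_left h2 hκpos.le
    _ = κ • ∫ x in (0:ℝ)..t, φ (κ*x) := (smul_eq_mul _ _).symm

include hn hc₀ in
lemma kappa_gt_one (hc₀3 : c₀ ≤ 3) :
    1 < (2 * (2/c₀) ^ (1/((n:ℝ)-1))) ^ (((n:ℝ)-1)/n) := by
  obtain ⟨h2n, hn1, he, hp⟩ := casts hn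
  have hx : (0:ℝ) < 2/c₀ := by positivity
  have hx1 : 2/c₀ ≤ 1 := by
    rw [div_le_one (by linarith)]; linarith
  have hp1 : 1/((n:ℝ)-1) ≤ 1 := by
    rw [div_le_one hn1]; linarith
  have h : (2/c₀) ^ (1:ℝ) ≤ (2/c₀) ^ (1/((n:ℝ)-1)) :=
    Real.rpow_le_rpow_of_exponent_ge hx hx1 hp1
  rw [Real.rpow_one] at h
  have hK1 : 1 < 2 * (2/c₀) ^ (1/((n:ℝ)-1)) := by
    have hc₀pos : (0:ℝ) < c₀ := by linarith
    have h43 : (4:ℝ)/3 ≤ 2*(2/c₀) := by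
      have : 2*(2/c₀) = 4/c₀ := by ring
      rw [this, div_le_div_iff₀ (by norm_num) hc₀pos]
      nlinarith
    nlinarith
  exact (Real.one_lt_rpow_iff_of_pos (by linarith)).2 (Or.inl ⟨hK1, he⟩)

include hn hA hAmono hApos hgE hconv hdiv hc₀ hnab in
lemma AT_iter (k : ℕ) {t : ℝ} (ht : 0 ≤ t) :
    (c₀/2 * (2 * (2/c₀) ^ (1/((n:ℝ)-1))) ^ (((n:ℝ)-1)/n))^k * AT A n t
      ≤ AT A n (((2 * (2/c₀) ^ (1/((n:ℝ)-1))) ^ (((n:ℝ)-1)/n))^k * t) := by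
  set κ := (2 * (2/c₀) ^ (1/((n:ℝ)-1))) ^ (((n:ℝ)-1)/n) with hκ
  have hκpos : 0 < κ := by
    apply Real.rpow_pos_of_pos
    have : (0:ℝ) < (2/c₀) ^ (1/((n:ℝ)-1)) := Real.rpow_pos_of_pos (by positivity) _
    positivity
  induction k with
  | zero => simp
  | succ k ih =>
      have hlampos : 0 ≤ c₀/2 * κ := by positivity
      calc (c₀/2 * κ)^(k+1) * AT A n t = (c₀/2*κ) * ((c₀/2*κ)^k * AT A n t) := by ring
        _ ≤ (c₀/2*κ) * AT A n (κ^k * t) := mul_le_mul_of_nonneg_left ih hlampos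
        _ ≤ AT A n (κ * (κ^k * t)) :=
            AT_scale hn hAmono hApos hgE hconv hdiv hc₀ hnab hA (by positivity)
        _ = AT A n (κ^(k+1) * t) := by ring_nf

end H

lemma inv_swap_lt {a b : ℝ} (ha : 0 < a) (hb : 0 < b) (h : a < b⁻¹) : b < a⁻¹ := by
  nlinarith [mul_inv_cancel₀ ha.ne', mul_inv_cancel₀ hb.ne',
    inv_pos.2 ha, inv_pos.2 hb]

lemma inv_swap_le {a b : ℝ} (ha : 0 < a) (hb : 0 < b) (h : a ≤ b⁻¹) : b ≤ a⁻¹ := by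
  nlinarith [mul_inv_cancel₀ ha.ne', mul_inv_cancel₀ hb.ne',
    inv_pos.2 ha, inv_pos.2 hb]

lemma inv_swap_lt' {a b : ℝ} (ha : 0 < a) (hb : 0 < b) (h : a⁻¹ < b) : b⁻¹ < a := by
  nlinarith [mul_inv_cancel₀ ha.ne', mul_inv_cancel₀ hb.ne',
    inv_pos.2 ha, inv_pos.2 hb]

theorem AT_sup_ratio_tendsto_zero (n : ℕ) (hn : 2 ≤ n) (A : ℝ → ℝ) (hA : IsYoung A)
    (hApos : ∀ t > (0:ℝ), 0 < A t)
    (hconv : ConvNearZero A n) (hdiv : DivNearInfty A n)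
    (hnabla : Nabla2Global A) :
    Filter.Tendsto
      (fun τ : ℝ => ⨆ t ∈ Set.Ioi (0:ℝ), ENNReal.ofReal (AT A n (τ * t) / (τ * AT A n t)))
      (nhdsWithin 0 (Set.Ioi 0)) (nhds 0) := by
  obtain ⟨c, hc, hcnab⟩ := hnabla
  set c₀ := min c 3 with hc₀def
  have hc₀ : 2 < c₀ := lt_min hc (by norm_num)
  have hc₀3 : c₀ ≤ 3 := min_le_right _ _
  have hnab : ∀ t ≥ (0:ℝ), c₀ * A t ≤ A (2*t) := fun t ht =>
    le_trans (mul_le_mul_of_nonneg_right (min_le_left _ _) (hA.nonneg t ht)) (hcnab t ht)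
  have hAmono : MonotoneOn A (Ici 0) := young_mono hA
  have hgE : AEMeasurable (gE A n) (volume.restrict (Ioi 0)) := by
    have hcont : ContinuousOn A (Ioi 0) :=
      (hA.convex.subset Ioi_subset_Ici_self (convex_Ioi 0)).continuousOn isOpen_Ioi
    have h1 : ContinuousOn (fun τ => (τ / A τ) ^ (1/((n:ℝ)-1))) (Ioi 0) := by
      apply ContinuousOn.rpow_const
      · exact (continuousOn_id).div hcont (fun x hx => (hApos x hx).ne')
      · intro x hx
        left
        exact (div_pos hx (hApos x hx)).ne'
    exact (ENNReal.continuous_ofReal.comp_continuousOn h1).aemeasurable measurableSet_Ioi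
  have hconv' : ∃ δ > (0:ℝ), In A n δ < ⊤ := hconv
  have hdiv' : (∫⁻ τ in Set.Ioi (1:ℝ), gE A n τ) = ⊤ := hdiv
  obtain ⟨h2n, hn1, he, hp⟩ := casts hn
  set κ := (2 * (2/c₀) ^ (1/((n:ℝ)-1))) ^ (((n:ℝ)-1)/n) with hκdef
  have hκ1 : 1 < κ := kappa_gt_one hn hc₀ hc₀3
  have hκpos : 0 < κ := by linarith
  set r := 2/c₀ with hrdef
  have hr0 : 0 < r := by rw [hrdef]; positivity
  have hr1 : r < 1 := by rw [hrdef, div_lt_one (by linarith)]; linarith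
  have hLr : c₀/2 * κ = κ / r := by
    rw [hrdef]
    field_simp
  have hκdef2 : κ = (2 * (2/c₀) ^ (1/((n:ℝ)-1))) ^ (((n:ℝ)-1)/n) := by
    rw [hκdef, hrdef]
  clear_value κ r
  rw [ENNReal.tendsto_nhds_zero]
  intro ε hε
  have hb : Tendsto (fun m : ℕ => ENNReal.ofReal (κ * r^m)) atTop (𝓝 0) := by
    have h1 : Tendsto (fun m : ℕ => κ * r^m) atTop (𝓝 0) := by
      have h2 := tendsto_pow_atTop_nhds_zero_of_lt_one hr0.le hr1
      simpa using h2.const_mul κ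
    have h3 := (ENNReal.continuous_ofReal.tendsto 0).comp h1
    rw [ENNReal.ofReal_zero] at h3
    exact h3
  obtain ⟨m, hm⟩ := (hb.eventually_lt_const hε).exists
  set δ₀ := min 1 (κ^m)⁻¹ with hδ₀def
  have hδ₀pos : 0 < δ₀ := lt_min one_pos (by positivity)
  filter_upwards [Ioo_mem_nhdsGT_of_mem (show (0:ℝ) ∈ Ico 0 δ₀ from ⟨le_rfl, hδ₀pos⟩)]
    with τ hτ
  obtain ⟨hτ0, hτδ⟩ := hτ
  have hτ1 : τ < 1 := lt_of_lt_of_le hτδ (min_le_left _ _)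
  have hτκ : τ < (κ^m)⁻¹ := lt_of_lt_of_le hτδ (min_le_right _ _)
  have hτinv1 : 1 < τ⁻¹ := by
    have := inv_swap_lt hτ0 one_pos (by simpa using hτ1)
    simpa using this
  have hκm : κ^m < τ⁻¹ := inv_swap_lt hτ0 (by positivity) hτκ
  have hj : ∃ j : ℕ, τ⁻¹ < κ^j := pow_unbounded_of_one_lt τ⁻¹ hκ1
  set j₀ := Nat.find hj with hj₀def
  have hj₀spec : τ⁻¹ < κ^j₀ := Nat.find_spec hj
  have hj₀ne : j₀ ≠ 0 := by
    intro h0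
    rw [h0, pow_zero] at hj₀spec
    linarith
  set k := j₀ - 1 with hkdef
  have hkj : k + 1 = j₀ := by omega
  have hk_le : κ^k ≤ τ⁻¹ := not_lt.1 (Nat.find_min hj (by omega))
  have hk_gt : τ⁻¹ < κ^(k+1) := by rw [hkj]; exact hj₀spec
  have hmk : m ≤ k := by
    by_contra hcon
    push_neg at hcon
    have : κ^(k+1) ≤ κ^m := pow_le_pow_right₀ hκ1.le (by omega)
    linarith
  refine iSup₂_le fun t ht => ?_
  have ht0 : 0 < t := ht
  refine le_trans (ENNReal.ofReal_le_ofReal ?_) hm.le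
  have hrk : r^k ≤ r^m := pow_le_pow_of_le_one hr0.le hr1.le hmk
  set a := AT A n t with hadef
  have ha : 0 ≤ a := AT_nonneg hn hAmono hApos hgE hconv' hdiv' hA t
  rcases eq_or_lt_of_le ha with haz | hapos
  · rw [← haz, mul_zero, div_zero]
    positivity
  · rw [div_le_iff₀ (by positivity)]
    set L := (c₀/2*κ)^k with hLdef
    have hLpos : 0 < L := by
      rw [hLdef]
      apply pow_pos
      nlinarith
    have h5 : AT A n (τ*t) ≤ AT A n ((κ^k)⁻¹ * t) := by
      apply AT_mono hn hAmono hApos hgE hconv' hdiv' hA (by positivity)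
      apply mul_le_mul_of_nonneg_right _ ht0.le
      exact inv_swap_le (by positivity) hτ0 hk_le
    have h6 := AT_iter hn hAmono hApos hgE hconv' hdiv' hc₀ hnab hA k
      (t := (κ^k)⁻¹ * t) (by positivity)
    rw [← hκdef2] at h6
    have h7 : κ^k * ((κ^k)⁻¹ * t) = t := by
      field_simp
    rw [h7] at h6
    have h8 : AT A n ((κ^k)⁻¹ * t) ≤ a / L := by
      rw [le_div_iff₀ hLpos]
      calc AT A n ((κ^k)⁻¹ * t) * L = L * AT A n ((κ^k)⁻¹ * t) := mul_comm _ _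
        _ ≤ a := h6
    have hτgt : (κ^(k+1))⁻¹ < τ := inv_swap_lt' hτ0 (by positivity) hk_gt
    have h9 : L⁻¹ ≤ κ * r^k * τ := by
      have hL : L = (κ/r)^k := by rw [hLdef, hLr]
      have hLinv : L⁻¹ = (r/κ)^k := by
        rw [hL, ← inv_pow, inv_div]
      have hκne : κ ≠ 0 := ne_of_gt hκpos
      have h10 : κ * r^k * (κ^(k+1))⁻¹ = (r/κ)^k := by
        rw [div_pow, pow_succ, mul_inv, div_eq_mul_inv]
        calc κ * r^k * ((κ^k)⁻¹ * κ⁻¹) = (κ * κ⁻¹) * (r^k * (κ^k)⁻¹) := by ring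
          _ = r^k * (κ^k)⁻¹ := by rw [mul_inv_cancel₀ hκne, one_mul]
      rw [hLinv, ← h10]
      apply mul_le_mul_of_nonneg_left hτgt.le (by positivity)
    calc AT A n (τ*t) ≤ a / L := le_trans h5 h8
      _ = a * L⁻¹ := div_eq_mul_inv _ _
      _ ≤ a * (κ * r^k * τ) := mul_le_mul_of_nonneg_left h9 ha
      _ ≤ a * (κ * r^m * τ) := by
          apply mul_le_mul_of_nonneg_left _ ha
          apply mul_le_mul_of_nonneg_right _ hτ0.le
          exact mul_le_mul_of_nonneg_left hrk hκpos.le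
      _ = κ * r^m * (τ * a) := by ring
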